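/- Let φ be a CNF with m clauses where every clause has at most M literals. Then there is a resolution refutation of Z(φ) of size O(m · M²). In particular, Z(φ) always has a polynomial-size resolution refutation. -/

import Mathlib

/-- Variables of `Z(φ)`: original variables, control variables `y_i`, chain variables `z_j`. -/
abbrev ZVar (X : Type) (m : ℕ) := X ⊕ (Fin m ⊕ Fin (m + 1))

def yVar {X : Type} {m : ℕ} (i : Fin m) : ZVar X m := Sum.inr (Sum.inl i)
def zVar {X : Type} {m : ℕ} (j : Fin (m + 1)) : ZVar X m := Sum.inr (Sum.inr j)

/-- Lift a clause (finset of literals) over `X` to a clause over `ZVar X m`. -/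
def liftClauseF {X : Type} [DecidableEq X] {m : ℕ} (C : Finset (X × Bool)) :
    Finset (ZVar X m × Bool) :=
  C.image (fun l => (Sum.inl l.1, l.2))

/-- The clauses of the lifted CNF `Z(φ)`. -/
def IsZClause {X : Type} [DecidableEq X] {m : ℕ} (φ : Fin m → Finset (X × Bool))
    (C : Finset (ZVar X m × Bool)) : Prop :=
  (∃ i, C = liftClauseF (φ i) ∪ {(yVar i, true)}) ∨
  (∃ i, ∃ l ∈ liftClauseF (φ i) ∪ {(yVar i, true)},
      C = {(l.1, !l.2), (zVar i.castSucc, false), (zVar i.succ, true)}) ∨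
  C = {(zVar (0 : Fin (m + 1)), true)} ∨
  C = {(zVar (Fin.last m), false)}

/-- A resolution refutation from an axiom set `Ax`: a sequence of clauses, each an
axiom or a resolvent of two earlier clauses, ending in the empty clause.
Its size is the length of the sequence. -/
def IsResRefutation {V : Type} [DecidableEq V] (Ax : Finset (V × Bool) → Prop)
    (L : List (Finset (V × Bool))) : Prop :=
  L.getLast? = some ∅ ∧
  ∀ (k : ℕ) (hk : k < L.length),
    Ax (L.get ⟨k, hk⟩) ∨
    ∃ (i j : ℕ) (hi : i < k) (hj : j < k) (x : V) (C D : Finset (V × Bool)),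
      L.get ⟨i, hi.trans hk⟩ = insert (x, true) C ∧
      L.get ⟨j, hj.trans hk⟩ = insert (x, false) D ∧
      L.get ⟨k, hk⟩ = C ∪ D


section
variable {V : Type} [DecidableEq V]

def Ok (Ax : Finset (V × Bool) → Prop) (L : List (Finset (V × Bool))) : Prop :=
  ∀ (k : ℕ) (C : Finset (V × Bool)), L[k]? = some C → Ax C ∨ ∃ i j : ℕ, i < k ∧ j < k ∧ ∃ (x : V) (C' D : Finset (V × Bool)),
    L[i]? = some (insert (x, true) C') ∧ L[j]? = some (insert (x, false) D) ∧ C = C' ∪ D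

def Prov (Ax : Finset (V × Bool) → Prop) (n : ℕ) (C : Finset (V × Bool)) : Prop :=
  ∃ L, Ok Ax L ∧ L.getLast? = some C ∧ L.length ≤ n

lemma getElem?_app_left {L L' : List (Finset (V × Bool))} {i : ℕ} {c : Finset (V × Bool)}
    (h : L[i]? = some c) : (L ++ L')[i]? = some c := by
  have hi : i < L.length := by
    by_contra hc
    rw [List.getElem?_eq_none (by omega)] at h; cases h
  rw [List.getElem?_append]; simp [hi, h]
  simpa [hi] using h

lemma getElem?_app_right {L L' : List (Finset (V × Bool))} {i : ℕ} {c : Finset (V × Bool)}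
    (h : L'[i]? = some c) : (L ++ L')[L.length + i]? = some c := by
  rw [List.getElem?_append]
  simp [Nat.add_sub_cancel_left, h]

lemma prov_mono {Ax : Finset (V × Bool) → Prop} {n n' : ℕ} {C : Finset (V × Bool)}
    (h : Prov Ax n C) (hn : n ≤ n') : Prov Ax n' C := by
  obtain ⟨L, o, g, ln⟩ := h; exact ⟨L, o, g, ln.trans hn⟩

lemma prov_ax {Ax : Finset (V × Bool) → Prop} {C : Finset (V × Bool)} (h : Ax C) :
    Prov Ax 1 C := by
  refine ⟨[C], ?_, rfl, le_refl _⟩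
  intro k c hc
  left
  match k, hc with
  | 0, hc =>
    simp at hc
    exact hc ▸ h

lemma ok_append {Ax : Finset (V × Bool) → Prop} {L₁ L₂ : List (Finset (V × Bool))}
    (h1 : Ok Ax L₁) (h2 : Ok Ax L₂) : Ok Ax (L₁ ++ L₂) := by
  intro k C hC
  rcases lt_or_ge k L₁.length with h | h
  · rw [List.getElem?_append, if_pos h] at hC
    rcases h1 k C hC with ha | ⟨i, j, hi, hj, x, C', D, e1, e2, e3⟩
    · exact Or.inl ha
    · exact Or.inr ⟨i, j, hi, hj, x, C', D, getElem?_app_left e1, getElem?_app_left e2, e3⟩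
  · rw [List.getElem?_append, if_neg (by omega)] at hC
    rcases h2 (k - L₁.length) C hC with ha | ⟨i, j, hi, hj, x, C', D, e1, e2, e3⟩
    · exact Or.inl ha
    · refine Or.inr ⟨L₁.length + i, L₁.length + j, by omega, by omega, x, C', D,
        getElem?_app_right e1, getElem?_app_right e2, e3⟩

lemma prov_res {Ax : Finset (V × Bool) → Prop} {a b : ℕ} {x : V} {C D : Finset (V × Bool)}
    (h1 : Prov Ax a (insert (x, true) C)) (h2 : Prov Ax b (insert (x, false) D)) :
    Prov Ax (a + b + 1) (C ∪ D) := by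
  obtain ⟨L₁, o1, g1, ln1⟩ := h1
  obtain ⟨L₂, o2, g2, ln2⟩ := h2
  have ne1 : L₁ ≠ [] := by rintro rfl; simp at g1
  have ne2 : L₂ ≠ [] := by rintro rfl; simp at g2
  have hl1 : 1 ≤ L₁.length := List.length_pos_iff.mpr ne1
  have hl2 : 1 ≤ L₂.length := List.length_pos_iff.mpr ne2
  refine ⟨(L₁ ++ L₂) ++ [C ∪ D], ?_, by simp, by simp; omega⟩
  intro k E hE
  rcases lt_or_ge k (L₁.length + L₂.length) with h | h
  · rw [List.getElem?_append, if_pos (by simpa using h)] at hE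
    rcases ok_append o1 o2 k E hE with ha | ⟨i, j, hi, hj, x', C', D', e1, e2, e3⟩
    · exact Or.inl ha
    · exact Or.inr ⟨i, j, hi, hj, x', C', D', getElem?_app_left e1, getElem?_app_left e2, e3⟩
  · have hk : k = L₁.length + L₂.length := by
      by_contra hc
      rw [List.getElem?_eq_none (by simp; omega)] at hE
      cases hE
    subst hk
    rw [List.getElem?_append, if_neg (by simp), List.getElem?_eq_getElem (by simp)] at hE
    simp at hE
    refine Or.inr ⟨L₁.length - 1, L₁.length + (L₂.length - 1), by omega, by omega,
      x, C, D, ?_, ?_, hE.symm⟩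
    · apply getElem?_app_left; apply getElem?_app_left
      rwa [← List.getLast?_eq_getElem?]
    · apply getElem?_app_left; apply getElem?_app_right
      rwa [← List.getLast?_eq_getElem?]

lemma prov_refutation {Ax : Finset (V × Bool) → Prop} {n : ℕ} (h : Prov Ax n ∅) :
    ∃ L : List (Finset (V × Bool)),
      (L.getLast? = some ∅ ∧
      ∀ (k : ℕ) (hk : k < L.length),
        Ax (L.get ⟨k, hk⟩) ∨
        ∃ (i j : ℕ) (hi : i < k) (hj : j < k) (x : V) (C D : Finset (V × Bool)),
          L.get ⟨i, hi.trans hk⟩ = insert (x, true) C ∧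
          L.get ⟨j, hj.trans hk⟩ = insert (x, false) D ∧
          L.get ⟨k, hk⟩ = C ∪ D) ∧ L.length ≤ n := by
  obtain ⟨L, o, g, ln⟩ := h
  refine ⟨L, ⟨g, ?_⟩, ln⟩
  intro k hk
  rcases o k (L.get ⟨k, hk⟩) (by simp [List.getElem?_eq_getElem hk]) with ha |
    ⟨i, j, hi, hj, x, C, D, e1, e2, e3⟩
  · exact Or.inl ha
  · refine Or.inr ⟨i, j, hi, hj, x, C, D, ?_, ?_, e3⟩
    · have := (List.getElem?_eq_getElem (hi.trans hk)).symm.trans e1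
      simpa using this
    · have := (List.getElem?_eq_getElem (hj.trans hk)).symm.trans e2
      simpa using this

end

section
variable {X : Type} [DecidableEq X] {m M : ℕ} (φ : Fin m → Finset (X × Bool))

/-- The chain clause `¬z_i ∨ z_{i+1}`. -/
def Tc (i : Fin m) : Finset (ZVar X m × Bool) :=
  {(zVar i.castSucc, false), (zVar i.succ, true)}

lemma not_mem_Tc {i : Fin m} {l : ZVar X m × Bool}
    (hl : l ∈ (liftClauseF (φ i) ∪ {(yVar i, true)} : Finset (ZVar X m × Bool)))
    (b : Bool) : (l.1, b) ∉ (Tc i : Finset (ZVar X m × Bool)) := by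
  simp only [Finset.mem_union, Finset.mem_singleton, liftClauseF, Finset.mem_image] at hl
  rcases hl with ⟨a, _, ha⟩ | rfl
  · have : l.1 = Sum.inl a.1 := by rw [← ha]
    simp [Tc, this, zVar]
  · simp [Tc, yVar, zVar]

lemma ax2 {i : Fin m} {l : ZVar X m × Bool}
    (hl : l ∈ (liftClauseF (φ i) ∪ {(yVar i, true)} : Finset (ZVar X m × Bool))) :
    IsZClause φ (insert (l.1, !l.2) (Tc i)) :=
  Or.inr (Or.inl ⟨i, l, hl, rfl⟩)

lemma step (i : Fin m) : ∀ (k : ℕ) (S : Finset (ZVar X m × Bool)), S.card = k →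
    S ⊆ liftClauseF (φ i) ∪ {(yVar i, true)} → ∀ n,
    Prov (IsZClause φ) n (S ∪ Tc i) → Prov (IsZClause φ) (n + 2 * k) (Tc i) := by
  intro k
  induction k with
  | zero =>
    intro S hc _ n h
    rw [Finset.card_eq_zero.mp hc, Finset.empty_union] at h
    simpa using h
  | succ k ih =>
    intro S hc hsub n h
    have hne : S.Nonempty := by rw [← Finset.card_pos, hc]; omega
    obtain ⟨l, hlS⟩ := hne
    have hl : l ∈ liftClauseF (φ i) ∪ {(yVar i, true)} := hsub hlS
    have hA : IsZClause φ (insert (l.1, !l.2) (Tc i)) := ax2 φ hl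
    have hmem : l ∈ S ∪ Tc i := Finset.mem_union_left _ hlS
    have herase : (S ∪ Tc i).erase l = S.erase l ∪ Tc i := by
      rw [Finset.erase_union_distrib]
      congr 1
      exact Finset.erase_eq_of_notMem (by simpa using not_mem_Tc φ hl l.2)
    have hcard : (S.erase l).card = k := by
      rw [Finset.card_erase_of_mem hlS, hc]; omega
    have hsub' : S.erase l ⊆ liftClauseF (φ i) ∪ {(yVar i, true)} :=
      (Finset.erase_subset _ _).trans hsub
    have key : Prov (IsZClause φ) (n + 2) (S.erase l ∪ Tc i) := by
      cases hb : l.2 with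
      | true =>
        have h1 : Prov (IsZClause φ) n (insert (l.1, true) ((S ∪ Tc i).erase l)) := by
          rw [show ((l.1, true) : ZVar X m × Bool) = l by rw [← hb],
            Finset.insert_erase hmem]
          exact h
        have h2 : Prov (IsZClause φ) 1 (insert (l.1, false) (Tc i)) := by
          have := prov_ax hA
          rwa [hb] at this
        have := prov_res h1 h2
        rw [herase] at this
        have e : (S.erase l ∪ Tc i) ∪ Tc i = S.erase l ∪ Tc i := by
          rw [Finset.union_assoc, Finset.union_idempotent]
        rwa [e] at this
      | false =>
        have h2 : Prov (IsZClause φ) n (insert (l.1, false) ((S ∪ Tc i).erase l)) := by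
          rw [show ((l.1, false) : ZVar X m × Bool) = l by rw [← hb],
            Finset.insert_erase hmem]
          exact h
        have h1 : Prov (IsZClause φ) 1 (insert (l.1, true) (Tc i)) := by
          have := prov_ax hA
          rwa [hb] at this
        have := prov_res h1 h2
        rw [herase] at this
        have e : Tc i ∪ (S.erase l ∪ Tc i) = S.erase l ∪ Tc i := by
          rw [Finset.union_comm, Finset.union_assoc, Finset.union_idempotent]
        rw [e] at this
        exact prov_mono this (by omega)
    have := ih (S.erase l) hcard hsub' (n + 2) key
    exact prov_mono this (by omega)

lemma link (hM : ∀ i, (φ i).card ≤ M) (i : Fin m) :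
    Prov (IsZClause φ) (3 + 2 * M) (Tc i) := by
  have a1 : IsZClause φ (liftClauseF (φ i) ∪ {(yVar i, true)}) := Or.inl ⟨i, rfl⟩
  have hy : ((yVar i, true) : ZVar X m × Bool) ∈
      (liftClauseF (φ i) ∪ {(yVar i, true)} : Finset (ZVar X m × Bool)) := by simp
  have a2 : IsZClause φ (insert (yVar i, false) (Tc i)) := by
    have := ax2 φ hy
    simpa using this
  have h1 : Prov (IsZClause φ) 1 (insert (yVar i, true) (liftClauseF (φ i))) := by
    have := prov_ax a1
    rw [Finset.union_comm] at this
    rwa [show ({(yVar i, true)} ∪ liftClauseF (φ i) : Finset (ZVar X m × Bool)) = insert (yVar i, true) (liftClauseF (φ i)) from (Finset.insert_eq _ _).symm] at this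
  have h3 : Prov (IsZClause φ) 3 (liftClauseF (φ i) ∪ Tc i) :=
    prov_res h1 (prov_ax a2)
  have hcard : (liftClauseF (φ i) : Finset (ZVar X m × Bool)).card ≤ M :=
    (Finset.card_image_le).trans (hM i)
  have := step φ i (liftClauseF (φ i)).card _ rfl Finset.subset_union_left 3 h3
  exact prov_mono this (by omega)

lemma chain (hM : ∀ i, (φ i).card ≤ M) :
    ∀ (j : ℕ) (hj : j ≤ m),
      Prov (IsZClause φ) (1 + j * (2 * M + 4)) {((zVar ⟨j, by omega⟩ : ZVar X m), true)} := by
  intro j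
  induction j with
  | zero =>
    intro hj
    have hz : IsZClause φ ({((zVar (0 : Fin (m+1)) : ZVar X m), true)} : Finset (ZVar X m × Bool)) :=
      Or.inr (Or.inr (Or.inl rfl))
    have := prov_ax hz
    have e : ((zVar (0 : Fin (m+1)) : ZVar X m), true) = ((zVar ⟨0, by omega⟩ : ZVar X m), true) := rfl
    rw [e] at this
    exact prov_mono this (by omega)
  | succ j ih =>
    intro hj
    set i : Fin m := ⟨j, by omega⟩ with hi
    have h1 : Prov (IsZClause φ) (1 + j * (2 * M + 4))
        (insert ((zVar i.castSucc : ZVar X m), true) ∅) := by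
      have := ih (by omega)
      rwa [show (insert ((zVar i.castSucc : ZVar X m), true) ∅ : Finset (ZVar X m × Bool)) =
        {((zVar ⟨j, by omega⟩ : ZVar X m), true)} from rfl]
    have h2 : Prov (IsZClause φ) (3 + 2 * M)
        (insert ((zVar i.castSucc : ZVar X m), false) {((zVar i.succ : ZVar X m), true)}) :=
      link φ hM i
    have := prov_res h1 h2
    rw [Finset.empty_union] at this
    have e : ((zVar i.succ : ZVar X m), true) = ((zVar ⟨j + 1, by omega⟩ : ZVar X m), true) := rfl
    rw [e] at this
    refine prov_mono this ?_
    have : (j + 1) * (2 * M + 4) = j * (2 * M + 4) + (2 * M + 4) := by ring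
    omega

lemma refute (hM : ∀ i, (φ i).card ≤ M) :
    Prov (IsZClause φ) (m * (2 * M + 4) + 4) (∅ : Finset (ZVar X m × Bool)) := by
  have h1 : Prov (IsZClause φ) (1 + m * (2 * M + 4))
      (insert ((zVar (Fin.last m) : ZVar X m), true) ∅) := by
    have := chain φ hM m le_rfl
    rwa [show (Fin.last m) = ⟨m, by omega⟩ from rfl]
  have h2 : Prov (IsZClause φ) 1 (insert ((zVar (Fin.last m) : ZVar X m), false) ∅) :=
    prov_ax (Or.inr (Or.inr (Or.inr rfl)))
  have := prov_res h1 h2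
  rw [Finset.empty_union] at this
  exact prov_mono this (by omega)

end


/-- if `φ` has `m` clauses, each with at most `M` literals, then `Z(φ)`
has a resolution refutation of size `O(m · M²)`. -/
theorem zClauses_resolution_refutation :
    ∃ c : ℕ, ∀ (X : Type) [DecidableEq X] (m M : ℕ) (φ : Fin m → Finset (X × Bool)),
      (∀ i, (φ i).card ≤ M) →
      ∃ L : List (Finset (ZVar X m × Bool)),
        IsResRefutation (IsZClause φ) L ∧ L.length ≤ c * (m + 1) * (M + 1) ^ 2 := by
  refine ⟨4, ?_⟩
  intro X _ m M φ hM
  obtain ⟨L, hres, hlen⟩ := prov_refutation (refute φ hM)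
  refine ⟨L, ⟨hres.1, hres.2⟩, hlen.trans ?_⟩
  have h2 : M + 1 ≤ (M + 1) ^ 2 := Nat.le_self_pow two_ne_zero _
  calc m * (2 * M + 4) + 4 ≤ 4 * (m + 1) * (M + 1) := by nlinarith
    _ ≤ 4 * (m + 1) * (M + 1) ^ 2 := Nat.mul_le_mul_left _ h2
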